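/- arXiv:1204.5681 — 2 statements merged into one kernel-verified Lean document; each statement's English description precedes it below -/
import Mathlib

section
/- Let G be a locally finitely presented Grothendieck category with a set S of finitely presented generators, and T a hereditary torsion class of finite type with quotient functor q: G → G/T. Then G/T is locally finitely presented and q(S) is a set of finitely presented generators of G/T. -/
open CategoryTheory Limits Opposite

universe v u u'

namespace Paper

variable {C : Type u} [Category.{v} C]

/-- An object `X` is finitely presented if `Hom(X, -)` preserves filtered colimits. -/
def FinitelyPresented (X : C) : Prop :=
  Nonempty (PreservesFilteredColimitsOfSize.{v, v} (coyoneda.obj (op X)))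

/-- A category is locally finitely presented if it has a set of finitely presented
generators and every object is a filtered direct limit of finitely presented objects. -/
def LocallyFinitelyPresented (C : Type u) [Category.{v} C] : Prop :=
  (∃ S : Set C, (∀ X ∈ S, FinitelyPresented X) ∧ ObjectProperty.IsSeparating S) ∧
    ∀ M : C, ∃ (J : Type v) (_ : SmallCategory J) (_ : IsFiltered J) (D : J ⥤ C)
      (c : Cocone D), Nonempty (IsColimit c) ∧ Nonempty (c.pt ≅ M) ∧
        ∀ j : J, FinitelyPresented (D.obj j)

/-- A Grothendieck category: an abelian category with exact filtered colimits (AB5)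
and a generator. -/
def IsGrothendieck (C : Type u) [Category.{v} C] [Abelian C]
    [HasColimitsOfSize.{v, v} C] : Prop :=
  (∀ (J : Type v) [SmallCategory J] [IsFiltered J],
      Nonempty (PreservesFiniteLimits (colim : (J ⥤ C) ⥤ C))) ∧
    ∃ G : C, IsSeparator G

/-- A hereditary torsion class: a class of objects closed under subobjects, quotients,
extensions and coproducts. -/
def IsHereditaryTorsionClass (T : Set C) [Abelian C] [HasColimitsOfSize.{v, v} C] :
    Prop :=
  (∀ (X Y : C) (f : X ⟶ Y), Mono f → Y ∈ T → X ∈ T) ∧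
  (∀ (X Y : C) (f : X ⟶ Y), Epi f → X ∈ T → Y ∈ T) ∧
  (∀ (S : ShortComplex C), S.ShortExact → S.X₁ ∈ T → S.X₃ ∈ T → S.X₂ ∈ T) ∧
  (∀ (ι : Type v) (f : ι → C), (∀ x : ι, f x ∈ T) → (∐ f) ∈ T)

/-- Transfer of finite presentation along an adjunction whose right adjoint preserves
filtered colimits. -/
lemma fp_transfer {C : Type u} [Category.{v} C] {D : Type u'} [Category.{v} D]
    (q : C ⥤ D) (ι : D ⥤ C) (adj : q ⊣ ι)
    (hι : PreservesFilteredColimitsOfSize.{v, v} ι)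
    (X : C) (hX : FinitelyPresented X) : FinitelyPresented (q.obj X) := by
  obtain ⟨hX⟩ := hX
  have e : coyoneda.obj (op (q.obj X)) ≅ ι ⋙ coyoneda.obj (op X) :=
    NatIso.ofComponents (fun M => Equiv.toIso (adj.homEquiv X M)) (by
      intro M N f
      ext g
      simp [Adjunction.homEquiv_naturality_right])
  have : PreservesFilteredColimitsOfSize.{v, v} (ι ⋙ coyoneda.obj (op X)) := inferInstance
  exact ⟨⟨fun J _ _ => preservesColimitsOfShape_of_natIso e.symm⟩⟩


/-- Let `G` be a locally finitely presented Grothendieck category with a set `S` of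
finitely presented generators, and `T` a hereditary torsion class of finite type with
quotient functor `q : G ⥤ G/T` (represented by any exact functor `q` with fully
faithful right adjoint `ι` whose kernel is exactly `T`, `ι` preserving direct limits).
Then `G/T` is locally finitely presented and `q(S)` is a set of finitely presented
generators of `G/T`. -/

theorem stmt7 (G : Type u) [Category.{v} G] [Abelian G] [HasColimitsOfSize.{v, v} G]
    (hG : IsGrothendieck G) (hlfp : LocallyFinitelyPresented G)
    (S : Set G) (hSfp : ∀ X ∈ S, FinitelyPresented X) (hSsep : ObjectProperty.IsSeparating S)
    (T : Set G) (hT : IsHereditaryTorsionClass T)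
    (D : Type u') [Category.{v} D] [Abelian D]
    (q : G ⥤ D) (ι : D ⥤ G) (adj : q ⊣ ι)
    [PreservesFiniteLimits q] (hcounit : IsIso adj.counit)
    (hker : ∀ M : G, IsZero (q.obj M) ↔ M ∈ T)
    (hft : Nonempty (PreservesFilteredColimitsOfSize.{v, v} ι)) :
    LocallyFinitelyPresented D ∧
    ObjectProperty.IsSeparating (q.obj '' S) ∧
    (∀ X ∈ S, FinitelyPresented (q.obj X)) := by
  obtain ⟨hι⟩ := hft
  have hfull : ∀ M : D, IsIso (adj.counit.app M) := fun M => inferInstance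
  -- finitely presented part
  have hfp : ∀ X : G, FinitelyPresented X → FinitelyPresented (q.obj X) :=
    fun X hX => fp_transfer q ι adj hι X hX
  -- separating part
  have hsep : ObjectProperty.IsSeparating (q.obj '' S) := by
    intro M N f g h
    have hι' : ι.map f = ι.map g := by
      apply hSsep
      intro X hX k
      have := h (q.obj X) ⟨X, hX, rfl⟩ ((adj.homEquiv X M).symm k)
      have h2 := congrArg (adj.homEquiv X N) this
      rw [Adjunction.homEquiv_naturality_right, Adjunction.homEquiv_naturality_right,
        Equiv.apply_symm_apply] at h2
      exact h2
    have h1 := congrArg q.map hι'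
    calc f = inv (adj.counit.app M) ≫ q.map (ι.map f) ≫ adj.counit.app N := by
            erw [adj.counit_naturality, IsIso.inv_hom_id_assoc]
      _ = inv (adj.counit.app M) ≫ q.map (ι.map g) ≫ adj.counit.app N := by rw [h1]
      _ = g := by erw [adj.counit_naturality, IsIso.inv_hom_id_assoc]
  refine ⟨⟨⟨q.obj '' S, ?_, hsep⟩, ?_⟩, hsep, fun X hX => hfp X (hSfp X hX)⟩
  · rintro _ ⟨X, hX, rfl⟩
    exact hfp X (hSfp X hX)
  · intro M
    obtain ⟨J, _, _, F, c, ⟨hc⟩, ⟨e⟩, hobj⟩ := hlfp.2 (ι.obj M)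
    have := adj.leftAdjoint_preservesColimits
    refine ⟨J, inferInstance, inferInstance, F ⋙ q, q.mapCocone c,
      ⟨isColimitOfPreserves q hc⟩, ⟨q.mapIso e ≪≫ asIso (adj.counit.app M)⟩,
      fun j => hfp (F.obj j) (hobj j)⟩


end Paper
end

section
/- Let A = ⊕_{n≥0} A_n be a positively graded ring such that A_{≥m} is a finitely generated left ideal for all m ≥ k (some k > 0). Then the class T of virtually finitely graded left graded A-modules (graded modules all of whose finitely generated graded submodules are finitely graded, i.e., nonzero in only finitely many degrees) is a hereditary torsion class in the category A-Gr of graded A-modules, closed under degree shifts. -/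
universe u v

open DirectSum

/-- The data of a `ℤ`-graded module over a `ℤ`-graded ring `(A, 𝒜)`: a grading by
additive subgroups, compatible with the ring grading, whose direct sum is internal. -/
structure GradedModuleData (A : Type u) [Ring A] (𝒜 : ℤ → AddSubgroup A)
    (M : Type v) [AddCommGroup M] [Module A M] where
  gr : ℤ → AddSubgroup M
  smul_mem : ∀ (i j : ℤ) (a : A) (x : M), a ∈ 𝒜 i → x ∈ gr j → a • x ∈ gr (i + j)
  isInternal : DirectSum.IsInternal gr

namespace GradedModuleData

variable {A : Type u} [Ring A] {𝒜 : ℤ → AddSubgroup A}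

/-- A submodule is graded (homogeneous) if it is spanned by its homogeneous elements. -/
def IsHomogeneous {M : Type v} [AddCommGroup M] [Module A M]
    (g : GradedModuleData A 𝒜 M) (N : Submodule A M) : Prop :=
  N = Submodule.span A {x : M | x ∈ N ∧ ∃ n : ℤ, x ∈ g.gr n}

/-- A submodule is finitely graded if it is nonzero in only finitely many degrees. -/
def IsFinitelyGraded {M : Type v} [AddCommGroup M] [Module A M]
    (g : GradedModuleData A 𝒜 M) (N : Submodule A M) : Prop :=
  {n : ℤ | ∃ x : M, x ∈ N ∧ x ∈ g.gr n ∧ x ≠ 0}.Finite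

/-- A graded module is virtually finitely graded if every finitely generated graded
submodule is finitely graded. -/
def IsVFG {M : Type v} [AddCommGroup M] [Module A M]
    (g : GradedModuleData A 𝒜 M) : Prop :=
  ∀ N : Submodule A M, g.IsHomogeneous N → N.FG → g.IsFinitelyGraded N

/-- The canonical grading on a direct sum of graded modules. -/
def directSumGrading {ι : Type v} {M : ι → Type v} [∀ i, AddCommGroup (M i)]
    [∀ i, Module A (M i)] (g : ∀ i, GradedModuleData A 𝒜 (M i)) (n : ℤ) :
    AddSubgroup (⨁ i, M i) where
  carrier := {x | ∀ i, x i ∈ (g i).gr n}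
  zero_mem' := by
    intro i
    rw [DirectSum.zero_apply]
    exact zero_mem _
  add_mem' := by
    intro x y hx hy i
    rw [DirectSum.add_apply]
    exact add_mem (hx i) (hy i)
  neg_mem' := by
    intro x hx i
    rw [DFinsupp.neg_apply]
    exact neg_mem (hx i)

end GradedModuleData

open GradedModuleData

/-- The left ideal `A_{≥ m}` of a graded ring. -/
def idealGE {A : Type u} [Ring A] (𝒜 : ℤ → AddSubgroup A) (m : ℤ) : Submodule A A :=
  Submodule.span A {a : A | ∃ n : ℤ, m ≤ n ∧ a ∈ 𝒜 n}

namespace GradedModuleData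

variable {A : Type u} [Ring A] {𝒜 : ℤ → AddSubgroup A}
variable {M : Type v} [AddCommGroup M] [Module A M]

/-- The degree-`n` component of `x`. -/
noncomputable def comp (g : GradedModuleData A 𝒜 M) (x : M) (n : ℤ) : M :=
  letI := g.isInternal.chooseDecomposition
  (DirectSum.decompose g.gr x n : M)

variable (g : GradedModuleData A 𝒜 M)

lemma comp_mem (x : M) (n : ℤ) : g.comp x n ∈ g.gr n := by
  letI := g.isInternal.chooseDecomposition
  exact (DirectSum.decompose g.gr x n).2

lemma comp_zero (n : ℤ) : g.comp 0 n = 0 := by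
  letI := g.isInternal.chooseDecomposition
  show ((DirectSum.decompose g.gr (0 : M) n : g.gr n) : M) = 0
  rw [DirectSum.decompose_zero]
  rfl

lemma comp_add (x y : M) (n : ℤ) : g.comp (x + y) n = g.comp x n + g.comp y n := by
  letI := g.isInternal.chooseDecomposition
  show ((DirectSum.decompose g.gr (x + y) n : g.gr n) : M) = _
  rw [DirectSum.decompose_add, DirectSum.add_apply]
  rfl

lemma comp_of_mem_same {x : M} {n : ℤ} (hx : x ∈ g.gr n) : g.comp x n = x := by
  letI := g.isInternal.chooseDecomposition
  exact DirectSum.decompose_of_mem_same g.gr hx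

lemma comp_of_mem_ne {x : M} {m n : ℤ} (hx : x ∈ g.gr m) (h : m ≠ n) : g.comp x n = 0 := by
  letI := g.isInternal.chooseDecomposition
  exact DirectSum.decompose_of_mem_ne g.gr hx h

lemma comp_sum {ι : Type*} (s : Finset ι) (y : ι → M) (n : ℤ) :
    g.comp (∑ i ∈ s, y i) n = ∑ i ∈ s, g.comp (y i) n := by
  classical
  induction s using Finset.induction with
  | empty => simpa using g.comp_zero n
  | insert _ _ h ih => simp [Finset.sum_insert h, g.comp_add, ih]

lemma exists_sum_comp (x : M) : ∃ s : Finset ℤ, x = ∑ n ∈ s, g.comp x n := by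
  letI := g.isInternal.chooseDecomposition
  classical
  exact ⟨(DirectSum.decompose g.gr x).support, (DirectSum.sum_support_decompose g.gr x).symm⟩

/-- Induction on the grading. -/
lemma grading_inductionOn {p : M → Prop} (h0 : p 0)
    (hhom : ∀ (n : ℤ) (x : M), x ∈ g.gr n → p x)
    (hadd : ∀ x y, p x → p y → p (x + y)) : ∀ x, p x := by
  letI := g.isInternal.chooseDecomposition
  exact DirectSum.Decomposition.inductionOn g.gr h0 (fun {i} m => hhom i m m.2) hadd

end GradedModuleData
namespace GradedModuleData

variable {A : Type u} [Ring A] {𝒜 : ℤ → AddSubgroup A}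
variable {M : Type v} [AddCommGroup M] [Module A M]
variable {M' : Type v} [AddCommGroup M'] [Module A M']
variable (g : GradedModuleData A 𝒜 M) (g' : GradedModuleData A 𝒜 M')

/-- Grade-preserving additive maps commute with taking components. -/
lemma map_comp (f : M →ₗ[A] M') (hf : ∀ (n : ℤ) (x : M), x ∈ g.gr n → f x ∈ g'.gr n)
    (x : M) (n : ℤ) : f (g.comp x n) = g'.comp (f x) n := by
  induction x using g.grading_inductionOn with
  | h0 => simp [g.comp_zero, g'.comp_zero]
  | hhom m x hx =>
    by_cases hmn : m = n
    · subst hmn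
      rw [g.comp_of_mem_same hx, g'.comp_of_mem_same (hf m x hx)]
    · rw [g.comp_of_mem_ne hx hmn, g'.comp_of_mem_ne (hf m x hx) hmn, map_zero]
  | hadd x y hx hy => rw [g.comp_add, map_add, map_add, g'.comp_add, hx, hy]

/-- Components of `a • y` for homogeneous `y`. -/
lemma comp_smul_of_mem [GradedRing 𝒜] (a : A) {y : M} {m : ℤ} (hy : y ∈ g.gr m) (n : ℤ) :
    g.comp (a • y) n = ((DirectSum.decompose 𝒜 a (n - m) : 𝒜 (n - m)) : A) • y := by
  induction a using DirectSum.Decomposition.inductionOn 𝒜 with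
  | zero => simp [g.comp_zero, DirectSum.decompose_zero]
  | @homogeneous i b =>
    by_cases him : i = n - m
    · subst him
      have : (b : A) • y ∈ g.gr n := by
        have := g.smul_mem (n - m) m (b : A) y b.2 hy
        rwa [show n - m + m = n by omega] at this
      rw [g.comp_of_mem_same this, DirectSum.decompose_coe, DirectSum.of_eq_same]
    · have : (b : A) • y ∈ g.gr (i + m) := g.smul_mem i m (b : A) y b.2 hy
      rw [g.comp_of_mem_ne this (by omega), DirectSum.decompose_coe,
        DirectSum.of_eq_of_ne _ _ _ (Ne.symm him), ZeroMemClass.coe_zero, zero_smul]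
  | add b c hb hc =>
    rw [add_smul, g.comp_add, hb, hc, DirectSum.decompose_add, DirectSum.add_apply,
      AddSubgroup.coe_add, add_smul]

/-- A submodule is closed under taking components. -/
def CompClosed (N : Submodule A M) : Prop :=
  ∀ x ∈ N, ∀ n : ℤ, g.comp x n ∈ N

lemma comp_smul_mem [GradedRing 𝒜] {N : Submodule A M} (a : A) {x : M}
    (hx : x ∈ N) (hc : ∀ m : ℤ, g.comp x m ∈ N) (n : ℤ) : g.comp (a • x) n ∈ N := by
  obtain ⟨s, hs⟩ := g.exists_sum_comp x
  have : a • x = ∑ m ∈ s, a • g.comp x m := by rw [← Finset.smul_sum, ← hs]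
  rw [this, g.comp_sum]
  refine Submodule.sum_mem _ fun m _ => ?_
  rw [g.comp_smul_of_mem a (g.comp_mem x m) n]
  exact Submodule.smul_mem _ _ (hc m)

lemma compClosed_span [GradedRing 𝒜] {S : Set M} (hS : ∀ s ∈ S, ∃ n : ℤ, s ∈ g.gr n) :
    g.CompClosed (Submodule.span A S) := by
  intro x hx
  refine Submodule.span_induction (p := fun x _ => ∀ n : ℤ, g.comp x n ∈ Submodule.span A S)
    ?_ ?_ ?_ ?_ hx
  · intro s hs n
    obtain ⟨m, hm⟩ := hS s hs
    by_cases hmn : m = n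
    · rw [g.comp_of_mem_same (hmn ▸ hm)]
      exact Submodule.subset_span hs
    · rw [g.comp_of_mem_ne hm hmn]; exact Submodule.zero_mem _
  · intro n; rw [g.comp_zero]; exact Submodule.zero_mem _
  · intro x y _ _ hx hy n
    rw [g.comp_add]; exact Submodule.add_mem _ (hx n) (hy n)
  · intro a x hmem hx n
    exact g.comp_smul_mem a hmem hx n

lemma isHomogeneous_iff_compClosed [GradedRing 𝒜] (N : Submodule A M) :
    g.IsHomogeneous N ↔ g.CompClosed N := by
  constructor
  · intro h
    intro x hx n
    have := g.compClosed_span (S := {x : M | x ∈ N ∧ ∃ n : ℤ, x ∈ g.gr n})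
      (fun s hs => hs.2) x (h ▸ hx) n
    rw [← h] at this
    exact this
  · intro h
    apply le_antisymm
    · intro x hx
      obtain ⟨s, hs⟩ := g.exists_sum_comp x
      rw [hs]
      refine Submodule.sum_mem _ fun n _ => Submodule.subset_span ?_
      exact ⟨h x hx n, n, g.comp_mem x n⟩
    · rw [Submodule.span_le]
      exact fun x hx => hx.1

lemma isHomogeneous_span [GradedRing 𝒜] {S : Set M} (hS : ∀ s ∈ S, ∃ n : ℤ, s ∈ g.gr n) :
    g.IsHomogeneous (Submodule.span A S) :=
  (g.isHomogeneous_iff_compClosed _).2 (g.compClosed_span hS)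

/-- Extract a finite homogeneous generating set. -/
lemma exists_homog_gens [GradedRing 𝒜] {N : Submodule A M} (hN : g.IsHomogeneous N)
    (hFG : N.FG) : ∃ T : Finset M,
      (∀ t ∈ T, t ∈ N ∧ ∃ n : ℤ, t ∈ g.gr n) ∧ Submodule.span A (T : Set M) = N := by
  classical
  obtain ⟨T₀, hT₀⟩ := hFG
  set S : Set M := {x : M | x ∈ N ∧ ∃ n : ℤ, x ∈ g.gr n} with hSdef
  have key : ∀ t : M, t ∈ N → ∃ T : Finset M, ↑T ⊆ S ∧ t ∈ Submodule.span A (T : Set M) := by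
    intro t ht
    exact Submodule.mem_span_finite_of_mem_span (hN ▸ ht)
  choose Tt hTt1 hTt2 using key
  refine ⟨T₀.attach.biUnion (fun t => Tt t.1 (hT₀ ▸ Submodule.subset_span t.2)), ?_, ?_⟩
  · intro t ht
    simp only [Finset.mem_biUnion, Finset.mem_attach, true_and] at ht
    obtain ⟨u, hu⟩ := ht
    exact hTt1 u.1 _ hu
  · apply le_antisymm
    · rw [Submodule.span_le]
      intro x hx
      simp only [Finset.coe_biUnion, Set.mem_iUnion, Finset.mem_coe] at hx
      obtain ⟨u, _, hu⟩ := hx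
      exact (hTt1 u.1 _ hu).1
    · refine le_trans (le_of_eq hT₀.symm) ?_
      rw [Submodule.span_le]
      intro t ht
      refine Submodule.span_mono ?_ (hTt2 t (hT₀ ▸ Submodule.subset_span ht))
      intro x hx
      simp only [Finset.coe_biUnion, Set.mem_iUnion, Finset.mem_coe]
      exact ⟨⟨t, ht⟩, Finset.mem_attach _ _, hx⟩

end GradedModuleData
namespace GradedModuleData

variable {A : Type u} [Ring A] {𝒜 : ℤ → AddSubgroup A}
variable {M : Type v} [AddCommGroup M] [Module A M]
variable {M' : Type v} [AddCommGroup M'] [Module A M']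
variable (g : GradedModuleData A 𝒜 M) (g' : GradedModuleData A 𝒜 M')

lemma map_compClosed (f : M →ₗ[A] M') (hf : ∀ (n : ℤ) (x : M), x ∈ g.gr n → f x ∈ g'.gr n)
    {N : Submodule A M} (hN : g.CompClosed N) : g'.CompClosed (N.map f) := by
  rintro _ ⟨x, hx, rfl⟩ n
  rw [← g.map_comp g' f hf]
  exact Submodule.mem_map_of_mem (hN x hx n)

/-- Closure under graded submodules. -/
lemma isVFG_of_injective [GradedRing 𝒜] (f : M →ₗ[A] M') (hinj : Function.Injective f)
    (hf : ∀ (n : ℤ) (x : M), x ∈ g.gr n → f x ∈ g'.gr n) (hv : g'.IsVFG) : g.IsVFG := by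
  intro N hN hFG
  have hmap : g'.IsFinitelyGraded (N.map f) :=
    hv _ ((g'.isHomogeneous_iff_compClosed _).2
      (g.map_compClosed g' f hf ((g.isHomogeneous_iff_compClosed _).1 hN))) (hFG.map f)
  refine hmap.subset ?_
  rintro n ⟨x, hx, hxn, hx0⟩
  refine ⟨f x, Submodule.mem_map_of_mem hx, hf n x hxn, fun h => hx0 (hinj ?_)⟩
  rw [h, map_zero]

/-- Closure under quotients. -/
lemma isVFG_of_surjective [GradedRing 𝒜] (f : M →ₗ[A] M') (hsurj : Function.Surjective f)
    (hf : ∀ (n : ℤ) (x : M), x ∈ g.gr n → f x ∈ g'.gr n) (hv : g.IsVFG) : g'.IsVFG := by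
  intro N hN hFG
  classical
  obtain ⟨T, hT, hTspan⟩ := g'.exists_homog_gens hN hFG
  have key : ∀ t : {t : M' // t ∈ T}, ∃ y : M, f y = (t : M') ∧ ∃ n : ℤ, y ∈ g.gr n := by
    rintro ⟨t, ht⟩
    obtain ⟨-, d, hd⟩ := hT t ht
    obtain ⟨z, hz⟩ := hsurj t
    refine ⟨g.comp z d, ?_, d, g.comp_mem z d⟩
    rw [g.map_comp g' f hf, hz, g'.comp_of_mem_same hd]
  choose yf hyf1 hyf2 using key
  set N' : Submodule A M := Submodule.span A (Set.range yf) with hN'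
  have hN'cc : g.CompClosed N' := g.compClosed_span (by rintro s ⟨t, rfl⟩; exact hyf2 t)
  have hN'map : N'.map f = N := by
    rw [hN', Submodule.map_span, ← Set.range_comp]
    have : Set.range (f ∘ yf) = (T : Set M') := by
      ext x
      constructor
      · rintro ⟨t, rfl⟩
        simpa [hyf1 t] using t.2
      · intro hx
        exact ⟨⟨x, hx⟩, hyf1 _⟩
    rw [this, hTspan]
  have hfin : g.IsFinitelyGraded N' :=
    hv N' ((g.isHomogeneous_iff_compClosed _).2 hN'cc)
      (Submodule.fg_span (Set.finite_range yf))
  refine hfin.subset ?_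
  rintro n ⟨x, hx, hxn, hx0⟩
  rw [← hN'map] at hx
  obtain ⟨z, hz, rfl⟩ := hx
  refine ⟨g.comp z n, hN'cc z hz n, g.comp_mem z n, fun h => hx0 ?_⟩
  have := g.map_comp g' f hf z n
  rw [h, map_zero, g'.comp_of_mem_same hxn] at this
  exact this.symm

end GradedModuleData
namespace GradedModuleData

variable {A : Type u} [Ring A] {𝒜 : ℤ → AddSubgroup A}

/-- Closure under shifts. -/
lemma isVFG_shift {M : Type v} [AddCommGroup M] [Module A M]
    (g : GradedModuleData A 𝒜 M) (c : ℤ) (hv : g.IsVFG)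
    (gS : GradedModuleData A 𝒜 M) (hgr : gS.gr = fun n => g.gr (n + c)) : gS.IsVFG := by
  intro N hN hFG
  have hset : {x : M | x ∈ N ∧ ∃ n : ℤ, x ∈ gS.gr n} =
      {x : M | x ∈ N ∧ ∃ n : ℤ, x ∈ g.gr n} := by
    ext x
    simp only [Set.mem_setOf_eq, hgr]
    refine and_congr_right fun _ => ⟨?_, ?_⟩
    · rintro ⟨n, hn⟩
      exact ⟨n + c, hn⟩
    · rintro ⟨n, hn⟩
      exact ⟨n - c, by simpa using hn⟩
  have hhom : g.IsHomogeneous N := by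
    rw [IsHomogeneous, ← hset]
    exact hN
  have hfin := hv N hhom hFG
  have : {n : ℤ | ∃ x : M, x ∈ N ∧ x ∈ gS.gr n ∧ x ≠ 0} =
      (fun n : ℤ => n + c) ⁻¹' {n : ℤ | ∃ x : M, x ∈ N ∧ x ∈ g.gr n ∧ x ≠ 0} := by
    ext n
    simp only [Set.mem_setOf_eq, Set.mem_preimage, hgr]
  rw [IsFinitelyGraded, this]
  exact hfin.preimage (Set.injOn_of_injective (add_left_injective c))

/-- Closure under coproducts. -/
lemma isVFG_directSum [GradedRing 𝒜] {ι : Type v} {Mf : ι → Type v}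
    [∀ i, AddCommGroup (Mf i)] [∀ i, Module A (Mf i)]
    (g : ∀ i, GradedModuleData A 𝒜 (Mf i)) (hv : ∀ i, (g i).IsVFG)
    (gD : GradedModuleData A 𝒜 (⨁ i, Mf i)) (hgr : gD.gr = directSumGrading g) :
    gD.IsVFG := by
  classical
  intro N hN hFG
  obtain ⟨T, hT, hTspan⟩ := gD.exists_homog_gens hN hFG
  set s : Finset ι := T.sup (fun t => t.support) with hs
  set K : Submodule A (⨁ i, Mf i) :=
    { carrier := {x | ∀ i ∉ s, x i = 0}
      add_mem' := by
        intro x y hx hy i hi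
        rw [DirectSum.add_apply, hx i hi, hy i hi, add_zero]
      zero_mem' := by
        intro i _
        rw [DirectSum.zero_apply]
      smul_mem' := by
        intro a x hx i hi
        rw [DirectSum.smul_apply, hx i hi, smul_zero] } with hK
  have hNK : N ≤ K := by
    rw [← hTspan, Submodule.span_le]
    intro t ht i hi
    have : i ∉ t.support := fun h => hi (Finset.le_sup (f := fun t => DFinsupp.support t) ht h)
    exact DFinsupp.notMem_support_iff.1 this
  have hcomp_pres : ∀ (i : ι) (n : ℤ) (x : ⨁ i, Mf i), x ∈ gD.gr n →
      DirectSum.component A ι Mf i x ∈ (g i).gr n := by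
    intro i n x hx
    rw [hgr] at hx
    exact hx i
  have hfin : ∀ i : ι, (g i).IsFinitelyGraded (N.map (DirectSum.component A ι Mf i)) :=
    fun i => hv i _ (((g i).isHomogeneous_iff_compClosed _).2
      (gD.map_compClosed (g i) _ (hcomp_pres i)
        ((gD.isHomogeneous_iff_compClosed _).1 hN))) (hFG.map _)
  refine Set.Finite.subset (Set.Finite.biUnion s.finite_toSet (fun i _ => hfin i)) ?_
  rintro n ⟨x, hx, hxn, hx0⟩
  have hex : ∃ i, x i ≠ 0 := by
    by_contra h
    push_neg at h
    exact hx0 (DFinsupp.ext fun i => by rw [h i, DirectSum.zero_apply])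
  obtain ⟨i, hi⟩ := hex
  have his : i ∈ s := by
    by_contra h
    exact hi (hNK hx i h)
  have hxin : x i ∈ (g i).gr n := by
    rw [hgr] at hxn
    exact hxn i
  exact Set.mem_biUnion his ⟨x i, Submodule.mem_map_of_mem hx, hxin, hi⟩

end GradedModuleData
namespace GradedModuleData

variable {A : Type u} [Ring A] {𝒜 : ℤ → AddSubgroup A}

/-- Closure under extensions. -/
lemma isVFG_extension [GradedRing 𝒜]
    (hpos : ∀ n : ℤ, n < 0 → 𝒜 n = ⊥)
    (k : ℤ) (hfg : ∀ m : ℤ, k ≤ m → (idealGE 𝒜 m).FG)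
    {M₁ M₂ M₃ : Type v} [AddCommGroup M₁] [Module A M₁] [AddCommGroup M₂] [Module A M₂]
    [AddCommGroup M₃] [Module A M₃]
    (g₁ : GradedModuleData A 𝒜 M₁) (g₂ : GradedModuleData A 𝒜 M₂)
    (g₃ : GradedModuleData A 𝒜 M₃)
    (f : M₁ →ₗ[A] M₂) (g : M₂ →ₗ[A] M₃) (hfinj : Function.Injective f)
    (hrange : LinearMap.range f = LinearMap.ker g)
    (hf : ∀ (n : ℤ) (x : M₁), x ∈ g₁.gr n → f x ∈ g₂.gr n)
    (hg : ∀ (n : ℤ) (x : M₂), x ∈ g₂.gr n → g x ∈ g₃.gr n)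
    (hv₁ : g₁.IsVFG) (hv₃ : g₃.IsVFG) : g₂.IsVFG := by
  classical
  intro N hN hFG
  obtain ⟨T, hT, hTspan⟩ := g₂.exists_homog_gens hN hFG
  have hdeg : ∀ t ∈ T, ∃ dd : ℤ, t ∈ g₂.gr dd := fun t ht => (hT t ht).2
  choose! d hd using hdeg
  -- the image `g(N)` is finitely graded, with degrees bounded by some `D₀`
  have hNg : g₃.IsFinitelyGraded (N.map g) :=
    hv₃ _ ((g₃.isHomogeneous_iff_compClosed _).2
      (g₂.map_compClosed g₃ g hg ((g₂.isHomogeneous_iff_compClosed _).1 hN))) (hFG.map g)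
  obtain ⟨D₀, hD₀⟩ := hNg.bddAbove
  rw [mem_upperBounds] at hD₀
  -- choose `D'` large enough
  obtain ⟨B, hB⟩ := (Set.Finite.image (fun t => k - 1 + d t) T.finite_toSet).bddAbove
  rw [mem_upperBounds] at hB
  set D' : ℤ := max D₀ B with hD'
  have hD'1 : ∀ n ∈ {n : ℤ | ∃ x : M₃, x ∈ N.map g ∧ x ∈ g₃.gr n ∧ x ≠ 0}, n ≤ D' :=
    fun n hn => le_trans (hD₀ n hn) (le_max_left _ _)
  have hD'2 : ∀ t ∈ T, k ≤ D' + 1 - d t := by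
    intro t ht
    have := hB (k - 1 + d t) ⟨t, ht, rfl⟩
    omega
  -- the homogeneous pieces of `N` in degrees `> D'`
  set U : Set M₂ := ⋃ t ∈ T, (fun a : A => a • t) '' {a : A | ∃ n : ℤ, D' + 1 - d t ≤ n ∧ a ∈ 𝒜 n}
    with hU
  set N' : Submodule A M₂ := Submodule.span A U with hN'
  have hUmem : ∀ s ∈ U, ∃ t ∈ T, ∃ a : A, ∃ n : ℤ, D' + 1 - d t ≤ n ∧ a ∈ 𝒜 n ∧ s = a • t := by
    intro s hs
    simp only [hU, Set.mem_iUnion, Set.mem_image, Set.mem_setOf_eq] at hs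
    obtain ⟨t, ht, a, ⟨n, hn, ha⟩, rfl⟩ := hs
    exact ⟨t, ht, a, n, hn, ha, rfl⟩
  have hUhom : ∀ s ∈ U, ∃ n : ℤ, s ∈ g₂.gr n := by
    intro s hs
    obtain ⟨t, ht, a, n, _, ha, rfl⟩ := hUmem s hs
    exact ⟨n + d t, g₂.smul_mem n (d t) a t ha (hd t ht)⟩
  have hN'cc := g₂.compClosed_span hUhom
  have hN'ker : N' ≤ LinearMap.ker g := by
    rw [hN', Submodule.span_le]
    intro s hs
    obtain ⟨t, ht, a, n, hn, ha, rfl⟩ := hUmem s hs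
    simp only [SetLike.mem_coe, LinearMap.mem_ker, map_smul]
    by_contra hne
    have h1 : a • g t ∈ g₃.gr (n + d t) := g₃.smul_mem n (d t) a (g t) ha (hg (d t) t (hd t ht))
    have h2 : a • g t ∈ N.map g :=
      ⟨a • t, Submodule.smul_mem _ _ (hT t ht).1, map_smul g a t⟩
    have := hD'1 (n + d t) ⟨a • g t, h2, h1, hne⟩
    omega
  have hN'range : N' ≤ LinearMap.range f := by
    rw [hrange]; exact hN'ker
  have hN'fg : N'.FG := by
    have heq : N' = ⨆ t ∈ T, Submodule.map (LinearMap.toSpanSingleton A M₂ t)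
        (idealGE 𝒜 (D' + 1 - d t)) := by
      rw [hN', hU, Submodule.span_iUnion₂]
      refine iSup_congr fun t => iSup_congr fun _ => ?_
      rw [idealGE, Submodule.map_span]
      congr 1
    rw [heq]
    exact Submodule.fg_biSup T _ (fun t ht => (hfg _ (hD'2 t ht)).map _)
  -- components of elements of `N` in degrees `> D'` lie in `N'`
  have hkey : ∀ x ∈ N, ∀ n : ℤ, D' < n → g₂.comp x n ∈ N' := by
    intro x hx n hn
    rw [← hTspan] at hx
    obtain ⟨c, -, hc⟩ := Submodule.mem_span_finset.1 hx
    rw [← hc, g₂.comp_sum]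
    refine Submodule.sum_mem _ fun t ht => ?_
    rw [g₂.comp_smul_of_mem (c t) (hd t ht) n]
    refine Submodule.subset_span ?_
    rw [hU]
    simp only [Set.mem_iUnion, Set.mem_image, Set.mem_setOf_eq]
    exact ⟨t, ht, _, ⟨n - d t, by omega, SetLike.coe_mem _⟩, rfl⟩
  -- degrees of nonzero homogeneous elements of `N` are bounded below
  have hlow : ∀ n : ℤ, ∀ x ∈ N, x ∈ g₂.gr n → x ≠ 0 → ∃ t ∈ T, d t ≤ n := by
    intro n x hx hxn hx0
    by_contra h
    push_neg at h
    apply hx0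
    rw [← hTspan] at hx
    obtain ⟨c, -, hc⟩ := Submodule.mem_span_finset.1 hx
    have hx' : x = g₂.comp x n := (g₂.comp_of_mem_same hxn).symm
    rw [hx', ← hc, g₂.comp_sum]
    refine Finset.sum_eq_zero fun t ht => ?_
    rw [g₂.comp_smul_of_mem (c t) (hd t ht) n]
    have hneg : n - d t < 0 := by have := h t ht; omega
    have hzero : ((DirectSum.decompose 𝒜 (c t) (n - d t) : 𝒜 (n - d t)) : A) = 0 := by
      have hmem : ((DirectSum.decompose 𝒜 (c t) (n - d t) : 𝒜 (n - d t)) : A) ∈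
          (⊥ : AddSubgroup A) := by
        rw [← hpos _ hneg]
        exact SetLike.coe_mem _
      exact AddSubgroup.mem_bot.1 hmem
    rw [hzero, zero_smul]
  -- pull `N'` back to `M₁`
  set P : Submodule A M₁ := N'.comap f with hP
  have hmapP : P.map f = N' := by
    rw [hP, Submodule.map_comap_eq, inf_eq_right.2 hN'range]
  have hPfg : P.FG := Submodule.fg_of_fg_map_injective f hfinj (by rw [hmapP]; exact hN'fg)
  have hPcc : g₁.CompClosed P := by
    intro x hx n
    have heq := g₁.map_comp g₂ f hf x n
    simp only [hP, Submodule.mem_comap] at hx ⊢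
    rw [heq]
    exact hN'cc (f x) hx n
  have hPfin := hv₁ P ((g₁.isHomogeneous_iff_compClosed _).2 hPcc) hPfg
  have hsub : {n : ℤ | ∃ x : M₂, x ∈ N' ∧ x ∈ g₂.gr n ∧ x ≠ 0} ⊆
      {n : ℤ | ∃ x : M₁, x ∈ P ∧ x ∈ g₁.gr n ∧ x ≠ 0} := by
    rintro n ⟨x, hx, hxn, hx0⟩
    obtain ⟨y, hy⟩ := hN'range hx
    have hyP : y ∈ P := by
      simp only [hP, Submodule.mem_comap, hy]
      exact hx
    have hcy : f (g₁.comp y n) = x := by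
      rw [g₁.map_comp g₂ f hf, hy, g₂.comp_of_mem_same hxn]
    refine ⟨g₁.comp y n, hPcc y hyP n, g₁.comp_mem y n, fun h0 => hx0 ?_⟩
    rw [← hcy, h0, map_zero]
  -- conclusion
  refine Set.Finite.subset (Set.Finite.union
    (Set.Finite.biUnion T.finite_toSet (fun t _ => Set.finite_Icc (d t) D'))
    (hPfin.subset hsub)) ?_
  rintro n ⟨x, hx, hxn, hx0⟩
  by_cases hn : n ≤ D'
  · obtain ⟨t, ht, hdt⟩ := hlow n x hx hxn hx0
    exact Or.inl (Set.mem_biUnion ht ⟨hdt, hn⟩)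
  · refine Or.inr ⟨x, ?_, hxn, hx0⟩
    have := hkey x hx n (by omega)
    rwa [g₂.comp_of_mem_same hxn] at this

end GradedModuleData

/-- Let `A = ⊕_{n ≥ 0} A_n` be a positively graded ring such that `A_{≥m}` is a finitely
generated left ideal for all `m ≥ k` (some `k > 0`).  Then the class `T` of virtually
finitely graded graded left `A`-modules is a hereditary torsion class in `A`-Gr:
closed under (graded) submodules, quotients, extensions and coproducts, and moreover
closed under degree shifts (rigid). -/
theorem stmt9 (A : Type u) [Ring A] (𝒜 : ℤ → AddSubgroup A) [GradedRing 𝒜]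
    (hpos : ∀ n : ℤ, n < 0 → 𝒜 n = ⊥)
    (k : ℤ) (hk : 0 < k) (hfg : ∀ m : ℤ, k ≤ m → (idealGE 𝒜 m).FG) :
    -- closed under graded submodules
    (∀ (M M' : Type v) (_ : AddCommGroup M) (_ : Module A M)
      (_ : AddCommGroup M') (_ : Module A M')
      (g : GradedModuleData A 𝒜 M) (g' : GradedModuleData A 𝒜 M')
      (f : M' →ₗ[A] M), Function.Injective f →
        (∀ (n : ℤ) (x : M'), x ∈ g'.gr n → f x ∈ g.gr n) →
        g.IsVFG → g'.IsVFG) ∧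
    -- closed under quotients (epimorphic images)
    (∀ (M M' : Type v) (_ : AddCommGroup M) (_ : Module A M)
      (_ : AddCommGroup M') (_ : Module A M')
      (g : GradedModuleData A 𝒜 M) (g' : GradedModuleData A 𝒜 M')
      (f : M →ₗ[A] M'), Function.Surjective f →
        (∀ (n : ℤ) (x : M), x ∈ g.gr n → f x ∈ g'.gr n) →
        g.IsVFG → g'.IsVFG) ∧
    -- closed under extensions
    (∀ (M₁ M₂ M₃ : Type v) (_ : AddCommGroup M₁) (_ : Module A M₁)
      (_ : AddCommGroup M₂) (_ : Module A M₂)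
      (_ : AddCommGroup M₃) (_ : Module A M₃)
      (g₁ : GradedModuleData A 𝒜 M₁) (g₂ : GradedModuleData A 𝒜 M₂)
      (g₃ : GradedModuleData A 𝒜 M₃)
      (f : M₁ →ₗ[A] M₂) (g : M₂ →ₗ[A] M₃), Function.Injective f →
        Function.Surjective g → LinearMap.range f = LinearMap.ker g →
        (∀ (n : ℤ) (x : M₁), x ∈ g₁.gr n → f x ∈ g₂.gr n) →
        (∀ (n : ℤ) (x : M₂), x ∈ g₂.gr n → g x ∈ g₃.gr n) →
        g₁.IsVFG → g₃.IsVFG → g₂.IsVFG) ∧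
    -- closed under coproducts
    (∀ (ι : Type v) (M : ι → Type v) (_ : ∀ i, AddCommGroup (M i))
      (_ : ∀ i, Module A (M i)) (g : ∀ i, GradedModuleData A 𝒜 (M i)),
        (∀ i, (g i).IsVFG) →
        ∀ gD : GradedModuleData A 𝒜 (⨁ i, M i),
          gD.gr = directSumGrading g → gD.IsVFG) ∧
    -- rigid: closed under shifts
    (∀ (M : Type v) (_ : AddCommGroup M) (_ : Module A M)
      (g : GradedModuleData A 𝒜 M) (c : ℤ), g.IsVFG →
        ∀ gS : GradedModuleData A 𝒜 M, gS.gr = (fun n => g.gr (n + c)) →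
          gS.IsVFG) := by
  refine ⟨?_, ?_, ?_, ?_, ?_⟩
  · intro M M' _ _ _ _ g g' f hinj hf hv
    exact g'.isVFG_of_injective g f hinj hf hv
  · intro M M' _ _ _ _ g g' f hsurj hf hv
    exact g.isVFG_of_surjective g' f hsurj hf hv
  · intro M₁ M₂ M₃ _ _ _ _ _ _ g₁ g₂ g₃ f g hfinj hgsurj hrange hf hg hv₁ hv₃
    exact isVFG_extension hpos k hfg g₁ g₂ g₃ f g hfinj hrange hf hg hv₁ hv₃
  · intro ι Mf _ _ g hv gD hgr
    exact isVFG_directSum g hv gD hgr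
  · intro M _ _ g c hv gS hgr
    exact isVFG_shift g c hv gS hgr
end
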